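/- For all integers h ≥ 1 and k ≥ 1, the closure C⟨h,k⟩ of the complete k-ary tree of depth h has treedepth exactly h. -/

import Mathlib

/-- Vertices of the complete `k`-ary tree of depth `h`: sequences over `Fin k`
of length `< h` (the root is the empty sequence). -/
def CVert (h k : ℕ) : Type := {l : List (Fin k) // l.length < h}

/-- `C⟨h,k⟩`, the closure of the complete `k`-ary tree of depth `h`:
two vertices are adjacent iff one is a strict ancestor (proper prefix)
of the other. -/
def Cgraph (h k : ℕ) : SimpleGraph (CVert h k) where
  Adj a b := a ≠ b ∧ (a.1 <+: b.1 ∨ b.1 <+: a.1)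
  symm := ⟨fun _ _ ⟨hne, hp⟩ => ⟨hne.symm, hp.symm⟩⟩
  loopless := ⟨fun _ ⟨hne, _⟩ => hne rfl⟩

/-- A rooted tree on vertex set `V`, encoded by its ancestor order:
a partial order with a minimum element (the root) in which the set of
ancestors of any vertex is a chain. -/
structure TreeOrder (V : Type*) where
  le : V → V → Prop
  refl : ∀ v, le v v
  antisymm : ∀ u v, le u v → le v u → u = v
  trans : ∀ u v w, le u v → le v w → le u w
  root : V
  root_le : ∀ v, le root v
  downChain : ∀ u v w, le u w → le v w → le u v ∨ le v u

/-- The (connected) graph `G` has treedepth at most `d`: there is a rooted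
tree on `V(G)` of depth at most `d` whose closure contains `G`. -/
def treedepthLE {V : Type*} (G : SimpleGraph V) (d : ℕ) : Prop :=
  ∃ T : TreeOrder V,
    (∀ s : Finset V, (∀ u ∈ s, ∀ v ∈ s, T.le u v ∨ T.le v u) → s.card ≤ d) ∧
    ∀ u v, G.Adj u v → T.le u v ∨ T.le v u

instance (h k : ℕ) : DecidableEq (CVert h k) :=
  fun a b => decidable_of_iff (a.1 = b.1) Subtype.ext_iff.symm

theorem stmt5 (h k : ℕ) (hh : 1 ≤ h) (hk : 1 ≤ k) :
    treedepthLE (Cgraph h k) h ∧ ∀ d : ℕ, d < h → ¬ treedepthLE (Cgraph h k) d := by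
  constructor
  · refine ⟨⟨fun a b => a.1 <+: b.1, fun v => List.prefix_refl _,
      fun u v h1 h2 => Subtype.ext (h1.eq_of_length (le_antisymm h1.length_le h2.length_le)),
      fun u v w h1 h2 => h1.trans h2,
      ⟨[], by simp; omega⟩, fun v => List.nil_prefix,
      fun u v w h1 h2 => List.prefix_or_prefix_of_prefix h1 h2⟩, ?_, ?_⟩
    · intro s hs
      have : s.card ≤ (Finset.range h).card := by
        apply Finset.card_le_card_of_injOn (fun v => v.1.length)
        · intro v hv
          simpa using v.2
        · intro u hu v hv hlen
          rcases hs u hu v hv with hp | hp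
          · exact Subtype.ext (hp.eq_of_length hlen)
          · exact (Subtype.ext (hp.eq_of_length hlen.symm)).symm
      simpa using this
    · rintro u v ⟨-, hp⟩
      exact hp
  · intro d hd ⟨T, hcard, hadj⟩
    set z : Fin k := ⟨0, hk⟩
    have hmem : ∀ i < h, ((List.replicate i z).length < h) := by
      intro i hi; simpa using hi
    set f : ℕ → CVert h k := fun i =>
      ⟨List.replicate (min i (h-1)) z, by rw [List.length_replicate]; omega⟩ with hf
    set s : Finset (CVert h k) := (Finset.range h).image f with hsdef
    have hfi : ∀ i ∈ Finset.range h, ∀ j ∈ Finset.range h, f i = f j → i = j := by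
      intro i hi j hj hij
      simp only [Finset.mem_range] at hi hj
      have := congrArg (fun v : CVert h k => v.1.length) hij
      simp only [f, List.length_replicate] at this
      rw [Nat.min_def, Nat.min_def] at this
      split_ifs at this <;> omega
    have hcards : s.card = h := by
      rw [hsdef, Finset.card_image_of_injOn hfi, Finset.card_range]
    have hchain : ∀ u ∈ s, ∀ v ∈ s, T.le u v ∨ T.le v u := by
      intro u hu v hv
      rcases Finset.mem_image.mp hu with ⟨i, hi, rfl⟩
      rcases Finset.mem_image.mp hv with ⟨j, hj, rfl⟩
      rcases eq_or_ne (f i) (f j) with he | hne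
      · left; rw [he]; exact T.refl _
      · apply hadj
        refine ⟨hne, ?_⟩
        rcases le_total (min i (h-1)) (min j (h-1)) with hle | hle
        · left
          simp only [f]
          exact ⟨List.replicate (min j (h-1) - min i (h-1)) z, by
            rw [← List.replicate_add]; congr 1; omega⟩
        · right
          simp only [f]
          exact ⟨List.replicate (min i (h-1) - min j (h-1)) z, by
            rw [← List.replicate_add]; congr 1; omega⟩
    have := hcard s hchain
    omega
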